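/- When ℝ² carries the ℓ¹ norm ‖(y, z)‖ = |y| + |z|, the operator T is a contraction on (𝓕 × 𝓗, d): for all (f_1, h_1), (f_2, h_2) ∈ 𝓕 × 𝓗, d(T(f_1, h_1), T(f_2, h_2)) ≤ δ · d((f_1, h_1), (f_2, h_2)), where δ = max over r, s ∈ {1,2} and 1 ≤ n ≤ K^{rs} of max{|α_n^{rs}|, |β_n^{rs}| + |γ_n^{rs}|}, and δ < 1. -/

import Mathlib

open Set

lemma stmt7_lt0 (g : ℕ → ℝ) (N : ℕ) (hN : 1 ≤ N) (h : ∀ i, i < N → g i < g (i + 1)) :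
    g 0 < g N := by
  induction N with
  | zero => omega
  | succ n ih =>
    rcases Nat.eq_zero_or_pos n with h0 | h1
    · subst h0; simpa using h 0 (by omega)
    · exact (ih h1 (fun i hi => h i (by omega))).trans (h n (by omega))

lemma stmt7_exists_interval (g : ℕ → ℝ) (N : ℕ) (hN : 1 ≤ N) (x : ℝ)
    (h0 : g 0 ≤ x) (h1 : x ≤ g N) :
    ∃ n, 1 ≤ n ∧ n ≤ N ∧ g (n - 1) ≤ x ∧ x ≤ g n := by
  induction N with
  | zero => omega
  | succ m ih =>
    rcases Nat.eq_zero_or_pos m with hm | hm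
    · subst hm; exact ⟨1, le_refl _, le_refl _, by simpa using h0, h1⟩
    · by_cases hx : x ≤ g m
      · obtain ⟨n, a1, b1, c1, d1⟩ := ih hm hx; exact ⟨n, a1, by omega, c1, d1⟩
      · exact ⟨m + 1, by omega, le_refl _, by simpa using le_of_not_ge hx, h1⟩

lemma stmt7_exists_preimage (A B s0 s1 p q x : ℝ) (hs : s0 < s1) (hp : A * s0 + B = p)
    (hq : A * s1 + B = q) (hpq : p < q) (h1 : p ≤ x) (h2 : x ≤ q) :
    ∃ t ∈ Set.Icc s0 s1, A * t + B = x := by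
  have hA : 0 < A := by nlinarith
  refine ⟨(x - B) / A, ⟨?_, ?_⟩, ?_⟩
  · rw [le_div_iff₀ hA]; nlinarith
  · rw [div_le_iff₀ hA]; nlinarith
  · field_simp; ring

lemma stmt7_key (A B C D E F al be ga δ s0 s1 x : ℝ)
    (F1 F2 u1 u2 : ℝ → ℝ × ℝ)
    (hu1 : ContinuousOn u1 (Set.Icc s0 s1)) (hu2 : ContinuousOn u2 (Set.Icc s0 s1))
    (heq1 : ∀ t ∈ Set.Icc s0 s1, F1 (A * t + B) =
      (C * t + al * (u1 t).1 + be * (u1 t).2 + D, E * t + ga * (u1 t).2 + F))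
    (heq2 : ∀ t ∈ Set.Icc s0 s1, F2 (A * t + B) =
      (C * t + al * (u2 t).1 + be * (u2 t).2 + D, E * t + ga * (u2 t).2 + F))
    (ht : ∃ t ∈ Set.Icc s0 s1, A * t + B = x)
    (hal : |al| ≤ δ) (hbg : |be| + |ga| ≤ δ) :
    |(F1 x).1 - (F2 x).1| + |(F1 x).2 - (F2 x).2| ≤
      δ * sSup ((fun t => |(u1 t).1 - (u2 t).1| + |(u1 t).2 - (u2 t).2|) '' Set.Icc s0 s1) := by
  obtain ⟨t, htm, rfl⟩ := ht
  have hδ0 : 0 ≤ δ := le_trans (abs_nonneg al) hal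
  rw [heq1 t htm, heq2 t htm]
  simp only
  set P := (u1 t).1 - (u2 t).1 with hP
  set Q := (u1 t).2 - (u2 t).2 with hQ
  have e1 : (C * t + al * (u1 t).1 + be * (u1 t).2 + D) -
      (C * t + al * (u2 t).1 + be * (u2 t).2 + D) = al * P + be * Q := by
    rw [hP, hQ]; ring
  have e2 : (E * t + ga * (u1 t).2 + F) - (E * t + ga * (u2 t).2 + F) = ga * Q := by
    rw [hQ]; ring
  rw [e1, e2]
  have hstep : |al * P + be * Q| + |ga * Q| ≤ δ * (|P| + |Q|) := by
    have h1 : |al * P + be * Q| ≤ |al| * |P| + |be| * |Q| := by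
      calc |al * P + be * Q| ≤ |al * P| + |be * Q| := abs_add_le _ _
        _ = |al| * |P| + |be| * |Q| := by rw [abs_mul, abs_mul]
    have h2 : |ga * Q| = |ga| * |Q| := abs_mul _ _
    nlinarith [abs_nonneg P, abs_nonneg Q, abs_nonneg al, abs_nonneg be, abs_nonneg ga]
  refine hstep.trans (mul_le_mul_of_nonneg_left ?_ hδ0)
  have hcont : ContinuousOn (fun t => |(u1 t).1 - (u2 t).1| + |(u1 t).2 - (u2 t).2|)
      (Set.Icc s0 s1) :=
    ((hu1.fst.sub hu2.fst).abs).add ((hu1.snd.sub hu2.snd).abs)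
  have hbdd : BddAbove ((fun t => |(u1 t).1 - (u2 t).1| + |(u1 t).2 - (u2 t).2|) ''
      Set.Icc s0 s1) := (isCompact_Icc.image_of_continuousOn hcont).bddAbove
  exact le_csSup hbdd ⟨t, htm, rfl⟩

theorem stmt_7
    (N M : ℕ) (hN : 2 ≤ N) (hM : 2 ≤ M)
    (x1 y1 z1 x2 y2 z2 : ℕ → ℝ)
    (hx1 : ∀ i, i < N → x1 i < x1 (i + 1))
    (hx2 : ∀ j, j < M → x2 j < x2 (j + 1))
    (hstar1 : ∀ i, 1 ≤ i → i ≤ N → x1 i - x1 (i - 1) < x2 M - x2 0)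
    (hstar2 : ∀ j, 1 ≤ j → j ≤ M → x2 j - x2 (j - 1) < x1 N - x1 0)
    (K : Fin 2 → Fin 2 → ℕ)
    (hK1 : K 0 0 + K 0 1 = N) (hK2 : K 1 0 + K 1 1 = M)
    (a b c d e f α β γ : Fin 2 → Fin 2 → ℕ → ℝ)
    (hα : ∀ r s n, 1 ≤ n → n ≤ K r s → |α r s n| < 1)
    (hγ : ∀ r s n, 1 ≤ n → n ≤ K r s → |γ r s n| < 1)
    (hβγ : ∀ r s n, 1 ≤ n → n ≤ K r s → |β r s n| + |γ r s n| < 1)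
    (w : Fin 2 → Fin 2 → ℕ → ℝ × ℝ × ℝ → ℝ × ℝ × ℝ)
    (hw : ∀ r s n p, w r s n p =
      (a r s n * p.1 + b r s n,
       c r s n * p.1 + α r s n * p.2.1 + β r s n * p.2.2 + d r s n,
       e r s n * p.1 + γ r s n * p.2.2 + f r s n))
    (hj11 : ∀ n, 1 ≤ n → n ≤ K 0 0 →
      w 0 0 n (x1 0, y1 0, z1 0) = (x1 (n - 1), y1 (n - 1), z1 (n - 1)) ∧
      w 0 0 n (x1 N, y1 N, z1 N) = (x1 n, y1 n, z1 n))
    (hj12 : ∀ n, 1 ≤ n → n ≤ K 0 1 →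
      w 0 1 n (x2 0, y2 0, z2 0) =
        (x1 (K 0 0 + n - 1), y1 (K 0 0 + n - 1), z1 (K 0 0 + n - 1)) ∧
      w 0 1 n (x2 M, y2 M, z2 M) = (x1 (K 0 0 + n), y1 (K 0 0 + n), z1 (K 0 0 + n)))
    (hj21 : ∀ n, 1 ≤ n → n ≤ K 1 0 →
      w 1 0 n (x1 0, y1 0, z1 0) = (x2 (n - 1), y2 (n - 1), z2 (n - 1)) ∧
      w 1 0 n (x1 N, y1 N, z1 N) = (x2 n, y2 n, z2 n))
    (hj22 : ∀ n, 1 ≤ n → n ≤ K 1 1 →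
      w 1 1 n (x2 0, y2 0, z2 0) =
        (x2 (K 1 0 + n - 1), y2 (K 1 0 + n - 1), z2 (K 1 0 + n - 1)) ∧
      w 1 1 n (x2 M, y2 M, z2 M) = (x2 (K 1 0 + n), y2 (K 1 0 + n), z2 (K 1 0 + n)))
    (u1 v1 u2 v2 ft1 ht1 ft2 ht2 : ℝ → ℝ × ℝ)
    (hu1 : (ContinuousOn u1 (Set.Icc (x1 0) (x1 N)) ∧ u1 (x1 0) = (y1 0, z1 0) ∧ u1 (x1 N) = (y1 N, z1 N)))
    (hv1 : (ContinuousOn v1 (Set.Icc (x2 0) (x2 M)) ∧ v1 (x2 0) = (y2 0, z2 0) ∧ v1 (x2 M) = (y2 M, z2 M)))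
    (hu2 : (ContinuousOn u2 (Set.Icc (x1 0) (x1 N)) ∧ u2 (x1 0) = (y1 0, z1 0) ∧ u2 (x1 N) = (y1 N, z1 N)))
    (hv2 : (ContinuousOn v2 (Set.Icc (x2 0) (x2 M)) ∧ v2 (x2 0) = (y2 0, z2 0) ∧ v2 (x2 M) = (y2 M, z2 M)))
    (hEQ1 : (∀ n, 1 ≤ n → n ≤ K 0 0 → ∀ x ∈ Set.Icc (x1 0) (x1 N),
      ft1 (a 0 0 n * x + b 0 0 n) =
        (c 0 0 n * x + α 0 0 n * (u1 x).1 + β 0 0 n * (u1 x).2 + d 0 0 n,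
         e 0 0 n * x + γ 0 0 n * (u1 x).2 + f 0 0 n)) ∧
    (∀ n, 1 ≤ n → n ≤ K 0 1 → ∀ x ∈ Set.Icc (x2 0) (x2 M),
      ft1 (a 0 1 n * x + b 0 1 n) =
        (c 0 1 n * x + α 0 1 n * (v1 x).1 + β 0 1 n * (v1 x).2 + d 0 1 n,
         e 0 1 n * x + γ 0 1 n * (v1 x).2 + f 0 1 n)) ∧
    (∀ n, 1 ≤ n → n ≤ K 1 0 → ∀ x ∈ Set.Icc (x1 0) (x1 N),
      ht1 (a 1 0 n * x + b 1 0 n) =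
        (c 1 0 n * x + α 1 0 n * (u1 x).1 + β 1 0 n * (u1 x).2 + d 1 0 n,
         e 1 0 n * x + γ 1 0 n * (u1 x).2 + f 1 0 n)) ∧
    (∀ n, 1 ≤ n → n ≤ K 1 1 → ∀ x ∈ Set.Icc (x2 0) (x2 M),
      ht1 (a 1 1 n * x + b 1 1 n) =
        (c 1 1 n * x + α 1 1 n * (v1 x).1 + β 1 1 n * (v1 x).2 + d 1 1 n,
         e 1 1 n * x + γ 1 1 n * (v1 x).2 + f 1 1 n)))
    (hEQ2 : (∀ n, 1 ≤ n → n ≤ K 0 0 → ∀ x ∈ Set.Icc (x1 0) (x1 N),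
      ft2 (a 0 0 n * x + b 0 0 n) =
        (c 0 0 n * x + α 0 0 n * (u2 x).1 + β 0 0 n * (u2 x).2 + d 0 0 n,
         e 0 0 n * x + γ 0 0 n * (u2 x).2 + f 0 0 n)) ∧
    (∀ n, 1 ≤ n → n ≤ K 0 1 → ∀ x ∈ Set.Icc (x2 0) (x2 M),
      ft2 (a 0 1 n * x + b 0 1 n) =
        (c 0 1 n * x + α 0 1 n * (v2 x).1 + β 0 1 n * (v2 x).2 + d 0 1 n,
         e 0 1 n * x + γ 0 1 n * (v2 x).2 + f 0 1 n)) ∧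
    (∀ n, 1 ≤ n → n ≤ K 1 0 → ∀ x ∈ Set.Icc (x1 0) (x1 N),
      ht2 (a 1 0 n * x + b 1 0 n) =
        (c 1 0 n * x + α 1 0 n * (u2 x).1 + β 1 0 n * (u2 x).2 + d 1 0 n,
         e 1 0 n * x + γ 1 0 n * (u2 x).2 + f 1 0 n)) ∧
    (∀ n, 1 ≤ n → n ≤ K 1 1 → ∀ x ∈ Set.Icc (x2 0) (x2 M),
      ht2 (a 1 1 n * x + b 1 1 n) =
        (c 1 1 n * x + α 1 1 n * (v2 x).1 + β 1 1 n * (v2 x).2 + d 1 1 n,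
         e 1 1 n * x + γ 1 1 n * (v2 x).2 + f 1 1 n)))
    (δm : ℝ)
    (hδm : IsGreatest {t : ℝ | ∃ (r s : Fin 2) (n : ℕ), 1 ≤ n ∧ n ≤ K r s ∧
      (t = |α r s n| ∨ t = |β r s n| + |γ r s n|)} δm) :
    δm < 1 ∧
    max (sSup ((fun x => |(ft1 x).1 - (ft2 x).1| + |(ft1 x).2 - (ft2 x).2|) '' Set.Icc (x1 0) (x1 N)))
        (sSup ((fun x => |(ht1 x).1 - (ht2 x).1| + |(ht1 x).2 - (ht2 x).2|) '' Set.Icc (x2 0) (x2 M))) ≤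
      δm *
        max (sSup ((fun x => |(u1 x).1 - (u2 x).1| + |(u1 x).2 - (u2 x).2|) '' Set.Icc (x1 0) (x1 N)))
            (sSup ((fun x => |(v1 x).1 - (v2 x).1| + |(v1 x).2 - (v2 x).2|) '' Set.Icc (x2 0) (x2 M))) := by
  have hδ0 : 0 ≤ δm := by
    obtain ⟨r, s, n, h1, h2, h3⟩ := hδm.1
    rcases h3 with rfl | rfl
    · exact abs_nonneg _
    · positivity
  have hδlt : δm < 1 := by
    obtain ⟨r, s, n, h1, h2, h3⟩ := hδm.1
    rcases h3 with rfl | rfl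
    · exact hα r s n h1 h2
    · exact hβγ r s n h1 h2
  refine ⟨hδlt, ?_⟩
  set S1 := sSup ((fun x => |(u1 x).1 - (u2 x).1| + |(u1 x).2 - (u2 x).2|) ''
    Set.Icc (x1 0) (x1 N)) with hS1
  set S2 := sSup ((fun x => |(v1 x).1 - (v2 x).1| + |(v1 x).2 - (v2 x).2|) ''
    Set.Icc (x2 0) (x2 M)) with hS2
  have hS1nn : 0 ≤ S1 := Real.sSup_nonneg (by rintro t ⟨x, _, rfl⟩; positivity)
  have hS2nn : 0 ≤ S2 := Real.sSup_nonneg (by rintro t ⟨x, _, rfl⟩; positivity)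
  have hD : 0 ≤ δm * max S1 S2 :=
    mul_nonneg hδ0 (le_trans hS1nn (le_max_left _ _))
  have hx1N : x1 0 < x1 N := stmt7_lt0 x1 N (by omega) hx1
  have hx2M : x2 0 < x2 M := stmt7_lt0 x2 M (by omega) hx2
  apply max_le
  · apply Real.sSup_le _ hD
    rintro val ⟨x, hx, rfl⟩
    obtain ⟨n, hn1, hn2, hxa, hxb⟩ := stmt7_exists_interval x1 N (by omega) x hx.1 hx.2
    by_cases hcase : n ≤ K 0 0
    · have hlt : x1 (n - 1) < x1 n := by
        have := hx1 (n - 1) (by omega); rwa [show n - 1 + 1 = n by omega] at this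
      obtain ⟨hj1, hj2⟩ := hj11 n hn1 hcase
      rw [hw] at hj1 hj2
      have hp : a 0 0 n * x1 0 + b 0 0 n = x1 (n - 1) := congrArg Prod.fst hj1
      have hq : a 0 0 n * x1 N + b 0 0 n = x1 n := congrArg Prod.fst hj2
      have hex := stmt7_exists_preimage _ _ _ _ _ _ x hx1N hp hq hlt hxa hxb
      have hkey := stmt7_key (a 0 0 n) (b 0 0 n) (c 0 0 n) (d 0 0 n) (e 0 0 n) (f 0 0 n)
        (α 0 0 n) (β 0 0 n) (γ 0 0 n) δm _ _ x ft1 ft2 u1 u2 hu1.1 hu2.1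
        (fun t ht => hEQ1.1 n hn1 hcase t ht) (fun t ht => hEQ2.1 n hn1 hcase t ht) hex
        (hδm.2 ⟨0, 0, n, hn1, hcase, Or.inl rfl⟩) (hδm.2 ⟨0, 0, n, hn1, hcase, Or.inr rfl⟩)
      exact hkey.trans (mul_le_mul_of_nonneg_left (le_max_left S1 S2) hδ0)
    · set m := n - K 0 0 with hmdef
      have hm1 : 1 ≤ m := by omega
      have hm2 : m ≤ K 0 1 := by omega
      obtain ⟨hj1, hj2⟩ := hj12 m hm1 hm2
      rw [hw] at hj1 hj2
      have hp : a 0 1 m * x2 0 + b 0 1 m = x1 (K 0 0 + m - 1) := congrArg Prod.fst hj1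
      have hq : a 0 1 m * x2 M + b 0 1 m = x1 (K 0 0 + m) := congrArg Prod.fst hj2
      rw [show K 0 0 + m - 1 = n - 1 by omega] at hp
      rw [show K 0 0 + m = n by omega] at hq
      have hlt : x1 (n - 1) < x1 n := by
        have := hx1 (n - 1) (by omega); rwa [show n - 1 + 1 = n by omega] at this
      have hex := stmt7_exists_preimage _ _ _ _ _ _ x hx2M hp hq hlt hxa hxb
      have hkey := stmt7_key (a 0 1 m) (b 0 1 m) (c 0 1 m) (d 0 1 m) (e 0 1 m) (f 0 1 m)
        (α 0 1 m) (β 0 1 m) (γ 0 1 m) δm _ _ x ft1 ft2 v1 v2 hv1.1 hv2.1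
        (fun t ht => hEQ1.2.1 m hm1 hm2 t ht) (fun t ht => hEQ2.2.1 m hm1 hm2 t ht) hex
        (hδm.2 ⟨0, 1, m, hm1, hm2, Or.inl rfl⟩) (hδm.2 ⟨0, 1, m, hm1, hm2, Or.inr rfl⟩)
      exact hkey.trans (mul_le_mul_of_nonneg_left (le_max_right S1 S2) hδ0)
  · apply Real.sSup_le _ hD
    rintro val ⟨x, hx, rfl⟩
    obtain ⟨n, hn1, hn2, hxa, hxb⟩ := stmt7_exists_interval x2 M (by omega) x hx.1 hx.2
    have hlt : x2 (n - 1) < x2 n := by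
      have := hx2 (n - 1) (by omega); rwa [show n - 1 + 1 = n by omega] at this
    by_cases hcase : n ≤ K 1 0
    · obtain ⟨hj1, hj2⟩ := hj21 n hn1 hcase
      rw [hw] at hj1 hj2
      have hp : a 1 0 n * x1 0 + b 1 0 n = x2 (n - 1) := congrArg Prod.fst hj1
      have hq : a 1 0 n * x1 N + b 1 0 n = x2 n := congrArg Prod.fst hj2
      have hex := stmt7_exists_preimage _ _ _ _ _ _ x hx1N hp hq hlt hxa hxb
      have hkey := stmt7_key (a 1 0 n) (b 1 0 n) (c 1 0 n) (d 1 0 n) (e 1 0 n) (f 1 0 n)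
        (α 1 0 n) (β 1 0 n) (γ 1 0 n) δm _ _ x ht1 ht2 u1 u2 hu1.1 hu2.1
        (fun t ht => hEQ1.2.2.1 n hn1 hcase t ht) (fun t ht => hEQ2.2.2.1 n hn1 hcase t ht) hex
        (hδm.2 ⟨1, 0, n, hn1, hcase, Or.inl rfl⟩) (hδm.2 ⟨1, 0, n, hn1, hcase, Or.inr rfl⟩)
      exact hkey.trans (mul_le_mul_of_nonneg_left (le_max_left S1 S2) hδ0)
    · set m := n - K 1 0 with hmdef
      have hm1 : 1 ≤ m := by omega
      have hm2 : m ≤ K 1 1 := by omega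
      obtain ⟨hj1, hj2⟩ := hj22 m hm1 hm2
      rw [hw] at hj1 hj2
      have hp : a 1 1 m * x2 0 + b 1 1 m = x2 (K 1 0 + m - 1) := congrArg Prod.fst hj1
      have hq : a 1 1 m * x2 M + b 1 1 m = x2 (K 1 0 + m) := congrArg Prod.fst hj2
      rw [show K 1 0 + m - 1 = n - 1 by omega] at hp
      rw [show K 1 0 + m = n by omega] at hq
      have hex := stmt7_exists_preimage _ _ _ _ _ _ x hx2M hp hq hlt hxa hxb
      have hkey := stmt7_key (a 1 1 m) (b 1 1 m) (c 1 1 m) (d 1 1 m) (e 1 1 m) (f 1 1 m)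
        (α 1 1 m) (β 1 1 m) (γ 1 1 m) δm _ _ x ht1 ht2 v1 v2 hv1.1 hv2.1
        (fun t ht => hEQ1.2.2.2 m hm1 hm2 t ht) (fun t ht => hEQ2.2.2.2 m hm1 hm2 t ht) hex
        (hδm.2 ⟨1, 1, m, hm1, hm2, Or.inl rfl⟩) (hδm.2 ⟨1, 1, m, hm1, hm2, Or.inr rfl⟩)
      exact hkey.trans (mul_le_mul_of_nonneg_left (le_max_right S1 S2) hδ0)
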